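/- arXiv:1302.0181 — 4 statements merged into one kernel-verified Lean document; each statement's English description precedes it below -/
import Mathlib

section
/- Let T and C be real-valued random variables that are conditionally independent given a random variable Z, let Y = min(T, C), and let t : (range of Z) → ℝ be measurable. Then almost surely E[𝟙(Y ≥ t(Z)) | Z] = P(T ≥ t(Z) | Z) · P(C ≥ t(Z) | Z). -/
open MeasureTheory ProbabilityTheory

section Aux

/-- For a set measurable w.r.t. the conditioning σ-algebra, the conditional expectation
kernel is a.e. (w.r.t. the trimmed measure) equal to the indicator of the set. -/
lemma condexpKernel_ae_eq_indicator_aux {Ω : Type*} (m' : MeasurableSpace Ω)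
    [mΩ : MeasurableSpace Ω] [StandardBorelSpace Ω] [Nonempty Ω]
    (μ : Measure Ω) [IsProbabilityMeasure μ]
    (hm' : m' ≤ mΩ) (A : Set Ω) (hA : MeasurableSet[m'] A) :
    ∀ᵐ ω ∂(μ.trim hm'), condExpKernel (mΩ := mΩ) μ m' ω A
      = Set.indicator A (fun _ => (1 : ENNReal)) ω := by
  have hAm : MeasurableSet[mΩ] A := hm' _ hA
  have h1 := condExpKernel_ae_eq_trim_condExp (mΩ := mΩ) (μ := μ) hm' hAm
  have h2 : (μ⟦A | m'⟧) = A.indicator (fun _ => (1:ℝ)) :=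
    condExp_of_stronglyMeasurable hm'
      (stronglyMeasurable_const.indicator hA) ((integrable_const (1:ℝ)).indicator hAm)
  rw [h2] at h1
  filter_upwards [h1] with ω hω
  have hne : condExpKernel (mΩ := mΩ) μ m' ω A ≠ ⊤ := measure_ne_top _ _
  by_cases h : ω ∈ A
  · simp only [Set.indicator_of_mem h, measureReal_def] at hω ⊢
    have := ENNReal.ofReal_toReal hne
    rw [← this, hω]; simp
  · simp only [Set.indicator_of_notMem h, measureReal_def] at hω ⊢
    exact (ENNReal.toReal_eq_zero_iff _).mp hω |>.resolve_right hne

/-- Conditional independence of two σ-algebras given `m'` implies conditional independence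
of the σ-algebras enlarged by `m'`. -/
lemma condIndep_sup_aux {Ω : Type*} (m' m₁ m₂ : MeasurableSpace Ω)
    [mΩ : MeasurableSpace Ω] [StandardBorelSpace Ω] [Nonempty Ω]
    (μ : Measure Ω) [IsProbabilityMeasure μ]
    (hm' : m' ≤ mΩ) (h₁ : m₁ ≤ mΩ) (h₂ : m₂ ≤ mΩ)
    (h : CondIndep m' m₁ m₂ hm' μ) :
    CondIndep m' (m' ⊔ m₁) (m' ⊔ m₂) hm' μ := by
  have hgen : ∀ (mX : MeasurableSpace Ω),
      m' ⊔ mX = MeasurableSpace.generateFrom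
        {s | ∃ A B, MeasurableSet[m'] A ∧ MeasurableSet[mX] B ∧ s = A ∩ B} := by
    intro mX
    refine le_antisymm (sup_le ?_ ?_) (MeasurableSpace.generateFrom_le ?_)
    · intro A hA
      exact MeasurableSpace.measurableSet_generateFrom
        ⟨A, Set.univ, hA, MeasurableSet.univ, (Set.inter_univ A).symm⟩
    · intro B hB
      exact MeasurableSpace.measurableSet_generateFrom
        ⟨Set.univ, B, MeasurableSet.univ, hB, (Set.univ_inter B).symm⟩
    · rintro s ⟨A, B, hA, hB, rfl⟩
      exact MeasurableSet.inter (le_sup_left (α := MeasurableSpace Ω) _ hA)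
        (le_sup_right (α := MeasurableSpace Ω) _ hB)
  have hpi : ∀ (mX : MeasurableSpace Ω), IsPiSystem
      {s | ∃ A B, MeasurableSet[m'] A ∧ MeasurableSet[mX] B ∧ s = A ∩ B} := by
    rintro mX s ⟨A1, B1, hA1, hB1, rfl⟩ u ⟨A2, B2, hA2, hB2, rfl⟩ _
    exact ⟨A1 ∩ A2, B1 ∩ B2, hA1.inter hA2, hB1.inter hB2, by
      ext ω; simp only [Set.mem_inter_iff]; tauto⟩
  refine Kernel.IndepSets.indep (sup_le hm' h₁) (sup_le hm' h₂)
    (hpi m₁) (hpi m₂) (hgen m₁) (hgen m₂) ?_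
  rintro s1 s2 ⟨A1, B1, hA1, hB1, rfl⟩ ⟨A2, B2, hA2, hB2, rfl⟩
  have hA1m : MeasurableSet[mΩ] A1 := hm' _ hA1
  have hA2m : MeasurableSet[mΩ] A2 := hm' _ hA2
  filter_upwards [h B1 B2 hB1 hB2, condexpKernel_ae_eq_indicator_aux m' (mΩ := mΩ) μ hm' A1 hA1,
    condexpKernel_ae_eq_indicator_aux m' (mΩ := mΩ) μ hm' A2 hA2] with ω hB hA1ω hA2ω
  by_cases hω1 : ω ∈ A1
  · by_cases hω2 : ω ∈ A2
    · have hA1c : condExpKernel (mΩ := mΩ) μ m' ω A1ᶜ = 0 := by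
        rw [measure_compl hA1m (measure_ne_top _ _), hA1ω, Set.indicator_of_mem hω1]
        simp
      have hA2c : condExpKernel (mΩ := mΩ) μ m' ω A2ᶜ = 0 := by
        rw [measure_compl hA2m (measure_ne_top _ _), hA2ω, Set.indicator_of_mem hω2]
        simp
      have e1 : condExpKernel (mΩ := mΩ) μ m' ω (A1 ∩ B1) = condExpKernel (mΩ := mΩ) μ m' ω B1 := by
        rw [Set.inter_comm]; exact measure_inter_conull hA1c
      have e2 : condExpKernel (mΩ := mΩ) μ m' ω (A2 ∩ B2) = condExpKernel (mΩ := mΩ) μ m' ω B2 := by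
        rw [Set.inter_comm]; exact measure_inter_conull hA2c
      have e3 : condExpKernel (mΩ := mΩ) μ m' ω (A1 ∩ B1 ∩ (A2 ∩ B2))
          = condExpKernel (mΩ := mΩ) μ m' ω (B1 ∩ B2) := by
        have hset : A1 ∩ B1 ∩ (A2 ∩ B2) = B1 ∩ B2 ∩ (A1 ∩ A2) := by
          ext x; simp only [Set.mem_inter_iff]; tauto
        rw [hset, measure_inter_conull (t := A1 ∩ A2)]
        exact measure_mono_null (by intro x; simp; tauto)
          (measure_union_null hA1c hA2c)
      rw [e1, e2, e3, hB]
    · have hA2z : condExpKernel (mΩ := mΩ) μ m' ω A2 = 0 := by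
        rw [hA2ω, Set.indicator_of_notMem hω2]
      have l : condExpKernel (mΩ := mΩ) μ m' ω (A1 ∩ B1 ∩ (A2 ∩ B2)) = 0 :=
        measure_mono_null (by intro x; simp; tauto) hA2z
      have r : condExpKernel (mΩ := mΩ) μ m' ω (A2 ∩ B2) = 0 :=
        measure_mono_null Set.inter_subset_left hA2z
      rw [l, r, mul_zero]
  · have hA1z : condExpKernel (mΩ := mΩ) μ m' ω A1 = 0 := by
      rw [hA1ω, Set.indicator_of_notMem hω1]
    have l : condExpKernel (mΩ := mΩ) μ m' ω (A1 ∩ B1 ∩ (A2 ∩ B2)) = 0 :=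
      measure_mono_null (by intro x; simp; tauto) hA1z
    have r : condExpKernel (mΩ := mΩ) μ m' ω (A1 ∩ B1) = 0 :=
      measure_mono_null Set.inter_subset_left hA1z
    rw [l, r, zero_mul]

end Aux

/-- If `T` and `C` are conditionally independent given `Z` and `Y = min(T, C)`, then for
measurable `t`, almost surely
`E[𝟙(Y ≥ t(Z)) | Z] = P(T ≥ t(Z) | Z) · P(C ≥ t(Z) | Z)`. -/
theorem condexp_indicator_min_eq_product
    {Ω : Type*} [mΩ : MeasurableSpace Ω] [StandardBorelSpace Ω] [Nonempty Ω]
    (μ : Measure Ω) [IsProbabilityMeasure μ]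
    {γ : Type*} [mγ : MeasurableSpace γ]
    (T C : Ω → ℝ) (hT : Measurable T) (hC : Measurable C)
    (Z : Ω → γ) (hZ : Measurable Z)
    (hTC : CondIndepFun (MeasurableSpace.comap Z mγ) (hZ.comap_le) T C μ)
    (Y : Ω → ℝ) (hY : ∀ ω, Y ω = min (T ω) (C ω))
    (t : γ → ℝ) (ht : Measurable t) :
    condExp (MeasurableSpace.comap Z mγ) μ
        (Set.indicator {ω | t (Z ω) ≤ Y ω} (fun _ => (1:ℝ)))
      =ᵐ[μ]
    fun ω =>
      condExp (MeasurableSpace.comap Z mγ) μ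
          (Set.indicator {ω' | t (Z ω') ≤ T ω'} (fun _ => (1:ℝ))) ω *
      condExp (MeasurableSpace.comap Z mγ) μ
          (Set.indicator {ω' | t (Z ω') ≤ C ω'} (fun _ => (1:ℝ))) ω := by
  have hm' : MeasurableSpace.comap Z mγ ≤ mΩ := hZ.comap_le
  have hTle : MeasurableSpace.comap T (inferInstance : MeasurableSpace ℝ) ≤ mΩ := hT.comap_le
  have hCle : MeasurableSpace.comap C (inferInstance : MeasurableSpace ℝ) ≤ mΩ := hC.comap_le
  -- conditional independence of enlarged σ-algebras
  have hInd : CondIndep (MeasurableSpace.comap Z mγ)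
      (MeasurableSpace.comap Z mγ ⊔ MeasurableSpace.comap T (inferInstance : MeasurableSpace ℝ))
      (MeasurableSpace.comap Z mγ ⊔ MeasurableSpace.comap C (inferInstance : MeasurableSpace ℝ))
      hm' μ :=
    condIndep_sup_aux _ _ _ μ hm' hTle hCle hTC
  -- measurability of the two events w.r.t. the enlarged σ-algebras
  have hZm' : Measurable[MeasurableSpace.comap Z mγ] Z := fun s hs => ⟨s, hs, rfl⟩
  have hTc : Measurable[MeasurableSpace.comap T (inferInstance : MeasurableSpace ℝ)] T :=
    fun s hs => ⟨s, hs, rfl⟩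
  have hCc : Measurable[MeasurableSpace.comap C (inferInstance : MeasurableSpace ℝ)] C :=
    fun s hs => ⟨s, hs, rfl⟩
  have hST_sup : MeasurableSet[MeasurableSpace.comap Z mγ
      ⊔ MeasurableSpace.comap T (inferInstance : MeasurableSpace ℝ)]
      {ω | t (Z ω) ≤ T ω} :=
    measurableSet_le ((ht.comp hZm').mono le_sup_left le_rfl) (hTc.mono le_sup_right le_rfl)
  have hSC_sup : MeasurableSet[MeasurableSpace.comap Z mγ
      ⊔ MeasurableSpace.comap C (inferInstance : MeasurableSpace ℝ)]
      {ω | t (Z ω) ≤ C ω} :=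
    measurableSet_le ((ht.comp hZm').mono le_sup_left le_rfl) (hCc.mono le_sup_right le_rfl)
  have hST_meas : MeasurableSet {ω | t (Z ω) ≤ T ω} := measurableSet_le (ht.comp hZ) hT
  have hSC_meas : MeasurableSet {ω | t (Z ω) ≤ C ω} := measurableSet_le (ht.comp hZ) hC
  have hIndSet : CondIndepSet (MeasurableSpace.comap Z mγ) hm'
      {ω | t (Z ω) ≤ T ω} {ω | t (Z ω) ≤ C ω} μ :=
    hInd.indepSet_of_measurableSet hST_sup hSC_sup
  have hmain := (condIndepSet_iff (MeasurableSpace.comap Z mγ) hm' _ _ hST_meas hSC_meas μ).mp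
    hIndSet
  have hset : {ω | t (Z ω) ≤ Y ω} = {ω | t (Z ω) ≤ T ω} ∩ {ω | t (Z ω) ≤ C ω} := by
    ext ω
    simp only [Set.mem_setOf_eq, Set.mem_inter_iff, hY ω, le_min_iff]
  rw [hset]
  exact hmain
end

section
/- Under conditional independence of T and C given Z, if the conditional distribution function F₀(·|Z) of T given Z satisfies F₀(β'Z | Z) = τ almost surely and G₀(t|Z) = P(C ≥ t | Z), then E[ Z·( 𝟙(Y ≥ β'Z)/G₀(β'Z|Z) − (1−τ) ) ] = 0, provided G₀(β'Z|Z) ≥ η₀ > 0 almost surely. (Unbiasedness of the censored quantile regression estimating equation.) -/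
open Filter Topology MeasureTheory ProbabilityTheory

lemma rat_mono_approx (a : ℝ) :
    ∃ r : ℕ → ℚ, Monotone r ∧ (∀ n, (r n : ℝ) < a) ∧
      Filter.Tendsto (fun n => (r n : ℝ)) Filter.atTop (nhds a) := by
  have hq : ∀ n : ℕ, ∃ q : ℚ, a - 1/(n+1) < (q:ℝ) ∧ (q:ℝ) < a := by
    intro n
    refine exists_rat_btwn ?_
    have : (0:ℝ) < 1/(n+1) := by positivity
    linarith
  choose q hq1 hq2 using hq
  have hne : ∀ n : ℕ, (Finset.range (n+1)).Nonempty := fun n => ⟨0, Finset.mem_range.2 (Nat.succ_pos n)⟩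
  set r : ℕ → ℚ := fun n => (Finset.range (n+1)).sup' (hne n) q with hr
  have hrlt : ∀ n, (r n : ℝ) < a := by
    intro n
    obtain ⟨j, hj, hje⟩ := Finset.exists_mem_eq_sup' (hne n) q
    rw [hr]; simp only []; rw [hje]; exact hq2 j
  have hqr : ∀ n, q n ≤ r n := fun n => Finset.le_sup' q (Finset.mem_range.2 (Nat.lt_succ_self n))
  refine ⟨r, ?_, hrlt, ?_⟩
  · intro n m hnm
    exact Finset.sup'_le _ _ fun j hj => Finset.le_sup' q
      (Finset.mem_range.2 ((Finset.mem_range.1 hj).trans_le (by omega)))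
  · have hle : ∀ n : ℕ, a - 1/(n+1) ≤ (r n : ℝ) := by
      intro n
      have h2 : (q n : ℝ) ≤ (r n : ℝ) := by exact_mod_cast hqr n
      exact le_trans (hq1 n).le h2
    refine tendsto_of_tendsto_of_tendsto_of_le_of_le (g := fun n : ℕ => a - 1/(n+1))
      (h := fun _ => a) ?_ tendsto_const_nhds hle (fun n => (hrlt n).le)
    have : Filter.Tendsto (fun n : ℕ => 1/((n:ℝ)+1)) Filter.atTop (nhds 0) :=
      tendsto_one_div_add_atTop_nhds_zero_nat
    simpa using tendsto_const_nhds.sub this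

lemma aux_pointwise {Ω : Type*} [mΩ : MeasurableSpace Ω]
    (ν : Measure Ω) [IsProbabilityMeasure ν]
    {T C W : Ω → ℝ} (hT : Measurable T) (hC : Measurable C) (hW : Measurable W) (a : ℝ)
    (H1 : ∀ q : ℚ, (ν (T ⁻¹' Set.Ici (q:ℝ) ∩ C ⁻¹' Set.Ici (q:ℝ))).toReal =
        (ν (T ⁻¹' Set.Ici (q:ℝ))).toReal * (ν (C ⁻¹' Set.Ici (q:ℝ))).toReal)
    (H2 : ∀ q : ℚ, (ν {x | W x ≤ (q:ℝ)}).toReal = if a ≤ (q:ℝ) then 1 else 0) :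
    (ν ({x | W x ≤ T x} ∩ {x | W x ≤ C x})).toReal =
      (ν {x | W x ≤ T x}).toReal * (ν {x | W x ≤ C x}).toReal := by
  -- Step 1 : ν concentrates on {W = a}
  have hlt : ν {x | W x < a} = 0 := by
    have hnull : ν (⋃ q : {q : ℚ // (q:ℝ) < a}, {x | W x ≤ ((q:ℚ):ℝ)}) = 0 := by
      refine measure_iUnion_null fun q => ?_
      have h0 := H2 q.1
      rw [if_neg (not_le.2 q.2)] at h0
      rcases (ENNReal.toReal_eq_zero_iff _).1 h0 with h | h
      · exact h
      · exact absurd h (measure_ne_top _ _)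
    refine measure_mono_null ?_ hnull
    intro x hx
    obtain ⟨q, hq1, hq2⟩ := exists_rat_btwn (show W x < a from hx)
    exact Set.mem_iUnion.2 ⟨⟨q, hq2⟩, hq1.le⟩
  have hgt : ν {x | a < W x} = 0 := by
    have hnull : ν (⋃ q : {q : ℚ // a ≤ (q:ℝ)}, {x | W x ≤ ((q:ℚ):ℝ)}ᶜ) = 0 := by
      refine measure_iUnion_null fun q => ?_
      have h1 : (ν {x | W x ≤ ((q:ℚ):ℝ)}).toReal = 1 := by rw [H2 q.1, if_pos q.2]
      have h1' : ν {x | W x ≤ ((q:ℚ):ℝ)} = 1 := (ENNReal.toReal_eq_one_iff _).1 h1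
      exact (prob_compl_eq_zero_iff (hW measurableSet_Iic)).2 h1'
    refine measure_mono_null ?_ hnull
    intro x hx
    obtain ⟨q, hq1, hq2⟩ := exists_rat_btwn (show a < W x from hx)
    exact Set.mem_iUnion.2 ⟨⟨q, hq1.le⟩, not_le.2 hq2⟩
  have hne : ν {x | W x ≠ a} = 0 := by
    have hU : {x | W x ≠ a} = {x | W x < a} ∪ {x | a < W x} := by
      ext x
      simp only [Set.mem_setOf_eq, Set.mem_union]
      exact ⟨fun h => h.lt_or_gt, fun h => h.elim (fun h => ne_of_lt h) (fun h => ne_of_gt h)⟩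
    rw [hU]
    exact measure_union_null hlt hgt
  -- Step 2 : replace the random threshold by the constant a, ν - a.e.
  have haeT : {x | W x ≤ T x} =ᵐ[ν] T ⁻¹' Set.Ici a := by
    rw [MeasureTheory.ae_eq_set]
    constructor
    · refine measure_mono_null ?_ hne
      rintro x ⟨h1, h2⟩
      refine fun h3 => h2 ?_
      show a ≤ T x
      rw [← h3]; exact h1
    · refine measure_mono_null ?_ hne
      rintro x ⟨h1, h2⟩
      refine fun h3 => h2 ?_
      show W x ≤ T x
      rw [h3]; exact h1
  have haeC : {x | W x ≤ C x} =ᵐ[ν] C ⁻¹' Set.Ici a := by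
    rw [MeasureTheory.ae_eq_set]
    constructor
    · refine measure_mono_null ?_ hne
      rintro x ⟨h1, h2⟩
      refine fun h3 => h2 ?_
      show a ≤ C x
      rw [← h3]; exact h1
    · refine measure_mono_null ?_ hne
      rintro x ⟨h1, h2⟩
      refine fun h3 => h2 ?_
      show W x ≤ C x
      rw [h3]; exact h1
  -- Step 3 : limit along rationals increasing to a
  obtain ⟨r, hrmono, hrlt, hrt⟩ := rat_mono_approx a
  have hkey : (ν (T ⁻¹' Set.Ici a ∩ C ⁻¹' Set.Ici a)).toReal =
      (ν (T ⁻¹' Set.Ici a)).toReal * (ν (C ⁻¹' Set.Ici a)).toReal := by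
    have hIciT : (⋂ n, T ⁻¹' Set.Ici ((r n : ℝ))) = T ⁻¹' Set.Ici a := by
      ext x
      simp only [Set.mem_iInter, Set.mem_preimage, Set.mem_Ici]
      exact ⟨fun h => le_of_tendsto hrt (Filter.Eventually.of_forall h),
        fun h n => (hrlt n).le.trans h⟩
    have hIciC : (⋂ n, C ⁻¹' Set.Ici ((r n : ℝ))) = C ⁻¹' Set.Ici a := by
      ext x
      simp only [Set.mem_iInter, Set.mem_preimage, Set.mem_Ici]
      exact ⟨fun h => le_of_tendsto hrt (Filter.Eventually.of_forall h),
        fun h n => (hrlt n).le.trans h⟩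
    have hIciD : (⋂ n, (T ⁻¹' Set.Ici ((r n : ℝ)) ∩ C ⁻¹' Set.Ici ((r n : ℝ)))) =
        T ⁻¹' Set.Ici a ∩ C ⁻¹' Set.Ici a := by
      rw [Set.iInter_inter_distrib, hIciT, hIciC]
    have tendT : Filter.Tendsto (fun n => (ν (T ⁻¹' Set.Ici ((r n : ℝ)))).toReal)
        Filter.atTop (nhds ((ν (T ⁻¹' Set.Ici a)).toReal)) := by
      rw [← hIciT]
      exact (ENNReal.tendsto_toReal (measure_ne_top _ _)).comp
        (tendsto_measure_iInter_atTop
          (fun n => (hT measurableSet_Ici).nullMeasurableSet)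
          (fun n k hnk => Set.preimage_mono (Set.Ici_subset_Ici.2 (by exact_mod_cast hrmono hnk)))
          ⟨0, measure_ne_top _ _⟩)
    have tendC : Filter.Tendsto (fun n => (ν (C ⁻¹' Set.Ici ((r n : ℝ)))).toReal)
        Filter.atTop (nhds ((ν (C ⁻¹' Set.Ici a)).toReal)) := by
      rw [← hIciC]
      exact (ENNReal.tendsto_toReal (measure_ne_top _ _)).comp
        (tendsto_measure_iInter_atTop
          (fun n => (hC measurableSet_Ici).nullMeasurableSet)
          (fun n k hnk => Set.preimage_mono (Set.Ici_subset_Ici.2 (by exact_mod_cast hrmono hnk)))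
          ⟨0, measure_ne_top _ _⟩)
    have tendD : Filter.Tendsto
        (fun n => (ν (T ⁻¹' Set.Ici ((r n : ℝ)) ∩ C ⁻¹' Set.Ici ((r n : ℝ)))).toReal)
        Filter.atTop (nhds ((ν (T ⁻¹' Set.Ici a ∩ C ⁻¹' Set.Ici a)).toReal)) := by
      rw [← hIciD]
      refine (ENNReal.tendsto_toReal (measure_ne_top _ _)).comp
        (tendsto_measure_iInter_atTop
          (fun n => ((hT measurableSet_Ici).inter (hC measurableSet_Ici)).nullMeasurableSet)
          (fun n k hnk => Set.inter_subset_inter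
            (Set.preimage_mono (Set.Ici_subset_Ici.2 (by exact_mod_cast hrmono hnk)))
            (Set.preimage_mono (Set.Ici_subset_Ici.2 (by exact_mod_cast hrmono hnk))))
          ⟨0, measure_ne_top _ _⟩)
    have tendD' : Filter.Tendsto
        (fun n => (ν (T ⁻¹' Set.Ici ((r n : ℝ)) ∩ C ⁻¹' Set.Ici ((r n : ℝ)))).toReal)
        Filter.atTop
        (nhds ((ν (T ⁻¹' Set.Ici a)).toReal * (ν (C ⁻¹' Set.Ici a)).toReal)) := by
      refine (tendT.mul tendC).congr fun n => ?_
      exact (H1 (r n)).symm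
    exact tendsto_nhds_unique tendD tendD'
  calc (ν ({x | W x ≤ T x} ∩ {x | W x ≤ C x})).toReal
      = (ν (T ⁻¹' Set.Ici a ∩ C ⁻¹' Set.Ici a)).toReal := by
        rw [measure_congr (haeT.inter haeC)]
    _ = (ν (T ⁻¹' Set.Ici a)).toReal * (ν (C ⁻¹' Set.Ici a)).toReal := hkey
    _ = (ν {x | W x ≤ T x}).toReal * (ν {x | W x ≤ C x}).toReal := by
        rw [measure_congr haeT, measure_congr haeC]

lemma condexp_indicator_inter_le_mul
    {Ω : Type*} {m : MeasurableSpace Ω} [mΩ : MeasurableSpace Ω] [StandardBorelSpace Ω]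
    [Nonempty Ω] (μ : Measure Ω) [IsProbabilityMeasure μ] (hm : m ≤ mΩ)
    {T C W : Ω → ℝ} (hT : Measurable T) (hC : Measurable C)
    (hW : Measurable[m] W)
    (hTC : CondIndepFun m hm T C μ) :
    (μ⟦{ω | W ω ≤ T ω} ∩ {ω | W ω ≤ C ω} | m⟧) =ᵐ[μ]
      fun ω => (μ⟦{ω | W ω ≤ T ω} | m⟧) ω * (μ⟦{ω | W ω ≤ C ω} | m⟧) ω := by
  have hWM : Measurable W := hW.mono hm le_rfl
  have h₁ : ∀ q : ℚ, ∀ᵐ ω ∂μ,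
      ((condExpKernel μ m ω) (T ⁻¹' Set.Ici (q:ℝ) ∩ C ⁻¹' Set.Ici (q:ℝ))).toReal =
      ((condExpKernel μ m ω) (T ⁻¹' Set.Ici (q:ℝ))).toReal *
        ((condExpKernel μ m ω) (C ⁻¹' Set.Ici (q:ℝ))).toReal := by
    intro q
    have hfac := (condIndepFun_iff_condExp_inter_preimage_eq_mul (μ := μ) hT hC).mp hTC
      (Set.Ici (q:ℝ)) (Set.Ici (q:ℝ)) measurableSet_Ici measurableSet_Ici
    have k1 := condExpKernel_ae_eq_condExp (μ := μ)
      (s := T ⁻¹' Set.Ici (q:ℝ) ∩ C ⁻¹' Set.Ici (q:ℝ)) hm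
      ((hT measurableSet_Ici).inter (hC measurableSet_Ici))
    have k2 := condExpKernel_ae_eq_condExp (μ := μ) (s := T ⁻¹' Set.Ici (q:ℝ)) hm
      (hT measurableSet_Ici)
    have k3 := condExpKernel_ae_eq_condExp (μ := μ) (s := C ⁻¹' Set.Ici (q:ℝ)) hm
      (hC measurableSet_Ici)
    filter_upwards [hfac, k1, k2, k3] with ω e0 e1 e2 e3
    simp only [measureReal_def] at e1 e2 e3
    rw [e1, e2, e3]; exact e0
  have h₂ : ∀ q : ℚ, ∀ᵐ ω ∂μ,
      ((condExpKernel μ m ω) {x | W x ≤ (q:ℝ)}).toReal = if W ω ≤ (q:ℝ) then 1 else 0 := by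
    intro q
    have hsm : MeasurableSet[m] {x | W x ≤ (q:ℝ)} := hW measurableSet_Iic
    have k := condExpKernel_ae_eq_condExp (μ := μ) (s := {x | W x ≤ (q:ℝ)}) hm (hm _ hsm)
    have hce : (μ⟦{x | W x ≤ (q:ℝ)} | m⟧)
        = Set.indicator {x | W x ≤ (q:ℝ)} (fun _ => (1:ℝ)) :=
      condExp_of_stronglyMeasurable hm
        (stronglyMeasurable_const.indicator hsm)
        ((integrable_const (1:ℝ)).indicator (hm _ hsm))
    filter_upwards [k] with ω e
    simp only [measureReal_def] at e
    rw [e, hce, Set.indicator_apply]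
    simp [Set.mem_setOf_eq]
  have kcap := condExpKernel_ae_eq_condExp (μ := μ)
    (s := {ω | W ω ≤ T ω} ∩ {ω | W ω ≤ C ω}) hm
    ((measurableSet_le hWM hT).inter (measurableSet_le hWM hC))
  have kT := condExpKernel_ae_eq_condExp (μ := μ) (s := {ω | W ω ≤ T ω}) hm
    (measurableSet_le hWM hT)
  have kC := condExpKernel_ae_eq_condExp (μ := μ) (s := {ω | W ω ≤ C ω}) hm
    (measurableSet_le hWM hC)
  filter_upwards [ae_all_iff.2 h₁, ae_all_iff.2 h₂, kcap, kT, kC] with ω H1 H2 e1 e2 e3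
  simp only [measureReal_def] at e1 e2 e3
  rw [← e1, ← e2, ← e3]
  exact aux_pointwise (condExpKernel μ m ω) hT hC hWM (W ω) H1 H2
lemma censored_qr_aux
    {Ω : Type*} {m : MeasurableSpace Ω} [mΩ : MeasurableSpace Ω] [StandardBorelSpace Ω]
    [Nonempty Ω] (μ : Measure Ω) [IsProbabilityMeasure μ] (hm : m ≤ mΩ)
    {p : ℕ} (T C : Ω → ℝ) (hT : Measurable T) (hC : Measurable C)
    (Z : Ω → EuclideanSpace ℝ (Fin p)) (hZ : Measurable Z) (hZm : Measurable[m] Z)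
    (Bz : ℝ) (hZbd : ∀ ω, ‖Z ω‖ ≤ Bz)
    (hTC : CondIndepFun m hm T C μ)
    (Y : Ω → ℝ) (hY : ∀ ω, Y ω = min (T ω) (C ω))
    (W : Ω → ℝ) (hWm : Measurable[m] W) (τ : ℝ)
    (hF : μ[Set.indicator {ω | T ω < W ω} (fun _ => (1:ℝ)) | m] =ᵐ[μ] fun _ => τ)
    (G0Z : Ω → ℝ) (hG0meas : Measurable[m] G0Z)
    (hG0 : μ[Set.indicator {ω | W ω ≤ C ω} (fun _ => (1:ℝ)) | m] =ᵐ[μ] G0Z)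
    (η₀ : ℝ) (hη₀ : 0 < η₀) (hG0pos : ∀ᵐ ω ∂μ, η₀ ≤ G0Z ω) :
    ∫ ω, (((if W ω ≤ Y ω then (1:ℝ) else 0) / G0Z ω) - (1 - τ)) • Z ω ∂μ = 0 := by
  have hWM : Measurable W := hWm.mono hm le_rfl
  have hYeq : Y = fun ω => min (T ω) (C ω) := funext hY
  have hYM : Measurable Y := by rw [hYeq]; exact hT.min hC
  have hGM : Measurable G0Z := hG0meas.mono hm le_rfl
  set ST : Set Ω := {ω | W ω ≤ T ω} with hSTdef
  set SC : Set Ω := {ω | W ω ≤ C ω} with hSCdef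
  have hSTmeas : MeasurableSet ST := measurableSet_le hWM hT
  have hSCmeas : MeasurableSet SC := measurableSet_le hWM hC
  -- conditional expectation of the indicator of ST is 1 - τ
  have hST_ce : (μ⟦ST | m⟧) =ᵐ[μ] fun _ => (1 - τ) := by
    have hid : Set.indicator ST (fun _ => (1:ℝ)) =
        (fun _ => (1:ℝ)) - Set.indicator {ω | T ω < W ω} (fun _ => (1:ℝ)) := by
      funext ω
      by_cases h : W ω ≤ T ω
      · simp [Set.indicator_apply, hSTdef, h, not_lt.2 h]
      · simp [Set.indicator_apply, hSTdef, h, not_le.1 h]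
    calc (μ⟦ST | m⟧)
        = μ[(fun _ => (1:ℝ)) - Set.indicator {ω | T ω < W ω} (fun _ => (1:ℝ)) | m] := by
          rw [hid]
      _ =ᵐ[μ] μ[(fun _ => (1:ℝ)) | m] - μ[Set.indicator {ω | T ω < W ω} (fun _ => (1:ℝ)) | m] :=
          condExp_sub (integrable_const 1)
            ((integrable_const (1:ℝ)).indicator (measurableSet_lt hT hWM)) m
      _ =ᵐ[μ] fun _ => (1 - τ) := by
          have h1 : μ[(fun _ => (1:ℝ)) | m] = fun _ => (1:ℝ) := condExp_const hm 1
          filter_upwards [hF] with ω hω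
          simp only [Pi.sub_apply, h1, hω]
  -- conditional expectation of the indicator of ST ∩ SC
  have hkey := condexp_indicator_inter_le_mul μ hm hT hC hWm hTC
  have hSY_ce : (μ⟦ST ∩ SC | m⟧) =ᵐ[μ] fun ω => (1 - τ) * G0Z ω := by
    filter_upwards [hkey, hST_ce, hG0] with ω h1 h2 h3
    rw [h1, h2, h3]
  -- definition of g
  set g : Ω → ℝ := fun ω => (if W ω ≤ Y ω then (1:ℝ) else 0) / G0Z ω with hgdef
  have hgmeas : Measurable g :=
    (Measurable.ite (measurableSet_le hWM hYM) measurable_const measurable_const).div hGM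
  have hgbd : ∀ᵐ ω ∂μ, ‖g ω‖ ≤ η₀⁻¹ := by
    filter_upwards [hG0pos] with ω hω
    have hG0' : 0 < G0Z ω := lt_of_lt_of_le hη₀ hω
    rw [hgdef]
    by_cases h : W ω ≤ Y ω
    · simp only [if_pos h, Real.norm_eq_abs]
      rw [abs_div, abs_one, abs_of_pos hG0']
      rw [one_div, inv_le_inv₀ hG0' hη₀]
      exact hω
    · simp only [if_neg h, Real.norm_eq_abs, zero_div, abs_zero]
      positivity
  have hgint : Integrable g μ :=
    Integrable.mono' (integrable_const (η₀⁻¹)) hgmeas.aestronglyMeasurable hgbd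
  -- conditional expectation of g equals 1 - τ
  have hg_ce : μ[g | m] =ᵐ[μ] fun _ => (1 - τ) := by
    have hgeq : g = fun ω => (G0Z ω)⁻¹ * Set.indicator (ST ∩ SC) (fun _ => (1:ℝ)) ω := by
      funext ω
      have hmem : (W ω ≤ Y ω) ↔ ω ∈ ST ∩ SC := by
        rw [hY ω]
        simp only [hSTdef, hSCdef, Set.mem_inter_iff, Set.mem_setOf_eq, le_min_iff]
      show (if W ω ≤ Y ω then (1:ℝ) else 0) / G0Z ω = _
      by_cases h : W ω ≤ Y ω
      · rw [if_pos h, Set.indicator_of_mem (hmem.1 h), div_eq_inv_mul]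
      · rw [if_neg h, Set.indicator_of_notMem (fun hc => h (hmem.2 hc)), zero_div, mul_zero]
    have hinv_bd : ∀ᵐ ω ∂μ, ‖(G0Z ω)⁻¹‖ ≤ η₀⁻¹ := by
      filter_upwards [hG0pos] with ω hω
      have hG0' : 0 < G0Z ω := lt_of_lt_of_le hη₀ hω
      rw [Real.norm_eq_abs, abs_of_pos (inv_pos.2 hG0'), inv_le_inv₀ hG0' hη₀]
      exact hω
    have hpull := condExp_stronglyMeasurable_mul_of_bound hm
      (Measurable.stronglyMeasurable (f := fun ω => (G0Z ω)⁻¹) hG0meas.inv)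
      ((integrable_const (1:ℝ)).indicator (hSTmeas.inter hSCmeas)) (η₀⁻¹) hinv_bd
    rw [hgeq]
    refine hpull.trans ?_
    filter_upwards [hSY_ce, hG0pos] with ω h1 h2
    have hG0' : G0Z ω ≠ 0 := ne_of_gt (lt_of_lt_of_le hη₀ h2)
    simp only [Pi.mul_apply]
    rw [h1]
    field_simp
  -- integrability of the integrand
  have hcbd : ∀ᵐ ω ∂μ, ‖g ω - (1 - τ)‖ ≤ η₀⁻¹ + |1 - τ| := by
    filter_upwards [hgbd] with ω hω
    calc ‖g ω - (1 - τ)‖ ≤ ‖g ω‖ + ‖(1 - τ)‖ := norm_sub_le _ _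
      _ ≤ η₀⁻¹ + |1 - τ| := by rw [Real.norm_eq_abs (1 - τ)]; exact add_le_add_left hω _
  have hBz0 : 0 ≤ Bz := le_trans (norm_nonneg _) (hZbd (Classical.arbitrary Ω))
  have hFint : Integrable (fun ω => (g ω - (1 - τ)) • Z ω) μ := by
    refine Integrable.mono' (integrable_const ((η₀⁻¹ + |1 - τ|) * Bz))
      (((hgmeas.sub measurable_const).aestronglyMeasurable).smul hZ.aestronglyMeasurable) ?_
    filter_upwards [hcbd] with ω hω
    rw [norm_smul]
    exact mul_le_mul hω (hZbd ω) (norm_nonneg _) (by positivity)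
  -- coordinatewise computation
  have hcoord : ∀ i : Fin p, ∫ ω, (g ω - (1 - τ)) * (Z ω i) ∂μ = 0 := by
    intro i
    have hZim : Measurable[m] (fun ω => Z ω i) := by
      have hproj : Measurable (fun x : EuclideanSpace ℝ (Fin p) => x i) :=
        (EuclideanSpace.proj (𝕜 := ℝ) i).continuous.measurable
      exact hproj.comp hZm
    have hZibd : ∀ ω, ‖Z ω i‖ ≤ Bz := by
      intro ω
      refine le_trans ?_ (hZbd ω)
      rw [EuclideanSpace.norm_eq, Real.norm_eq_abs, ← Real.sqrt_sq_eq_abs]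
      refine Real.sqrt_le_sqrt ?_
      calc Z ω i ^ 2 = ‖Z ω i‖ ^ 2 := by rw [Real.norm_eq_abs, sq_abs]
        _ ≤ ∑ j : Fin p, ‖Z ω j‖ ^ 2 := Finset.single_le_sum
            (f := fun j => ‖Z ω j‖ ^ 2) (fun j _ => by positivity) (Finset.mem_univ i)
    have hint2 : Integrable (fun ω => g ω - (1 - τ)) μ := hgint.sub (integrable_const _)
    have hprod_int : Integrable (fun ω => (Z ω i) * (g ω - (1 - τ))) μ := by
      refine Integrable.mono' (integrable_const (Bz * (η₀⁻¹ + |1 - τ|)))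
        (((hZim.mono hm le_rfl).aestronglyMeasurable).mul
          ((hgmeas.sub measurable_const).aestronglyMeasurable)) ?_
      filter_upwards [hcbd] with ω hω
      rw [Real.norm_eq_abs, abs_mul]
      exact mul_le_mul (hZibd ω) hω (abs_nonneg _) hBz0
    have hpull := condExp_stronglyMeasurable_mul_of_bound hm
      hZim.stronglyMeasurable hint2 Bz (Filter.Eventually.of_forall hZibd)
    have hzero : μ[(fun ω => (Z ω i) * (g ω - (1 - τ))) | m] =ᵐ[μ] fun _ => (0:ℝ) := by
      refine hpull.trans ?_
      have hsub : μ[(fun ω => g ω - (1 - τ)) | m] =ᵐ[μ] fun _ => (0:ℝ) := by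
        have h2 := condExp_sub (m := m) hgint (integrable_const (1 - τ))
        refine h2.trans ?_
        have hcc : μ[(fun _ => (1 - τ : ℝ)) | m] = fun _ => (1 - τ) := condExp_const hm _
        filter_upwards [hg_ce] with ω h1
        simp only [Pi.sub_apply, h1, hcc, sub_self]
      filter_upwards [hsub] with ω h1
      simp only [Pi.mul_apply, h1, mul_zero]
    have hmain : ∫ ω, (Z ω i) * (g ω - (1 - τ)) ∂μ = 0 := by
      rw [← integral_condExp (μ := μ) (f := fun ω => (Z ω i) * (g ω - (1 - τ))) hm, integral_congr_ae hzero, integral_zero]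
    rw [← hmain]
    congr 1
    funext ω
    ring
  -- conclude
  refine PiLp.ext fun i => ?_
  have hproj := (EuclideanSpace.proj (𝕜 := ℝ) i).integral_comp_comm hFint
  have hpa : (EuclideanSpace.proj (𝕜 := ℝ) i) (∫ ω, (g ω - (1 - τ)) • Z ω ∂μ)
      = (∫ ω, (g ω - (1 - τ)) • Z ω ∂μ) i := rfl
  have hz : (0 : EuclideanSpace ℝ (Fin p)) i = 0 := rfl
  rw [hz, ← hpa, ← hproj, ← hcoord i]
  refine integral_congr_ae (Filter.Eventually.of_forall fun ω => ?_)
  show (EuclideanSpace.proj (𝕜 := ℝ) i) ((g ω - (1 - τ)) • Z ω) = (g ω - (1 - τ)) * (Z ω i)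
  simp [smul_eq_mul]

/-- Unbiasedness of the censored quantile regression estimating equation: under conditional
independence of `T` and `C` given `Z`, if `F₀(β'Z|Z) = τ` a.s. and `G₀(β'Z|Z) ≥ η₀ > 0`
a.s., then `E[Z(𝟙(Y ≥ β'Z)/G₀(β'Z|Z) − (1−τ))] = 0`. -/
theorem censored_qr_estimating_equation_unbiased
    {Ω : Type*} [mΩ : MeasurableSpace Ω] [StandardBorelSpace Ω] [Nonempty Ω]
    (μ : Measure Ω) [IsProbabilityMeasure μ]
    {p : ℕ} (T C : Ω → ℝ) (hT : Measurable T) (hC : Measurable C)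
    (Z : Ω → EuclideanSpace ℝ (Fin p)) (hZ : Measurable Z)
    (Bz : ℝ) (hZbd : ∀ ω, ‖Z ω‖ ≤ Bz)
    (hTC : CondIndepFun (MeasurableSpace.comap Z inferInstance) (hZ.comap_le) T C μ)
    (Y : Ω → ℝ) (hY : ∀ ω, Y ω = min (T ω) (C ω))
    (β : EuclideanSpace ℝ (Fin p)) (τ : ℝ) (hτ : τ ∈ Set.Ioo (0:ℝ) 1)
    (hF : condExp (MeasurableSpace.comap Z inferInstance) μ
        (Set.indicator {ω | T ω < (inner ℝ β (Z ω) : ℝ)} (fun _ => (1:ℝ)))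
      =ᵐ[μ] fun _ => τ)
    (G0Z : Ω → ℝ)
    (hG0meas : Measurable[MeasurableSpace.comap Z inferInstance] G0Z)
    (hG0 : condExp (MeasurableSpace.comap Z inferInstance) μ
        (Set.indicator {ω | (inner ℝ β (Z ω) : ℝ) ≤ C ω} (fun _ => (1:ℝ)))
      =ᵐ[μ] G0Z)
    (η₀ : ℝ) (hη₀ : 0 < η₀) (hG0pos : ∀ᵐ ω ∂μ, η₀ ≤ G0Z ω) :
    ∫ ω, (((if (inner ℝ β (Z ω) : ℝ) ≤ Y ω then (1:ℝ) else 0) / G0Z ω) - (1 - τ)) • Z ω ∂μ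
      = 0 := by
  have hZm : Measurable[MeasurableSpace.comap Z inferInstance] Z := fun s hs => ⟨s, hs, rfl⟩
  have hWm : Measurable[MeasurableSpace.comap Z inferInstance] (fun ω => (inner ℝ β (Z ω) : ℝ)) :=
    Measurable.inner measurable_const hZm
  exact censored_qr_aux μ hZ.comap_le T C hT hC Z hZ hZm Bz hZbd hTC Y hY
    (fun ω => (inner ℝ β (Z ω) : ℝ)) hWm τ hF G0Z hG0meas hG0 η₀ hη₀ hG0pos
end

section
/- Let M : ℝ^p → ℝ^p be continuously differentiable in a convex neighborhood U of β₀ with M(β₀) = 0, and suppose the Jacobian DM(β) is negative definite uniformly on U (i.e., u' DM(β) u ≤ −c‖u‖² for some c > 0, all β ∈ U, all u). Then β₀ is the unique zero of M in U, and ‖M(β)‖ ≥ c‖β − β₀‖ for all β ∈ U. -/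
open scoped RealInnerProductSpace

/-- If `M` is `C¹` on an open convex neighborhood `U` of `β₀`, `M(β₀) = 0`, and the Jacobian
is uniformly negative definite on `U`, then `β₀` is the unique zero of `M` in `U` and
`‖M(β)‖ ≥ c ‖β − β₀‖` on `U`. -/
theorem unique_zero_of_negative_definite_jacobian
    {p : ℕ} (U : Set (EuclideanSpace ℝ (Fin p))) (hUopen : IsOpen U) (hUconv : Convex ℝ U)
    (β₀ : EuclideanSpace ℝ (Fin p)) (hβ₀ : β₀ ∈ U)
    (M : EuclideanSpace ℝ (Fin p) → EuclideanSpace ℝ (Fin p))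
    (hM : ContDiffOn ℝ 1 M U) (hM0 : M β₀ = 0) (c : ℝ) (hc : 0 < c)
    (hneg : ∀ β ∈ U, ∀ u : EuclideanSpace ℝ (Fin p),
      inner ℝ u (fderiv ℝ M β u)  ≤ -c * ‖u‖ ^ 2) :
    (∀ β ∈ U, M β = 0 → β = β₀) ∧ (∀ β ∈ U, c * ‖β - β₀‖ ≤ ‖M β‖) := by
  have hMdiff : DifferentiableOn ℝ M U := hM.differentiableOn one_ne_zero
  have key : ∀ β ∈ U, c * ‖β - β₀‖ ≤ ‖M β‖ := by
    intro β hβ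
    set u : EuclideanSpace ℝ (Fin p) := β - β₀ with hu
    by_cases hu0 : u = 0
    · simp [hu0, mul_nonneg hc.le]
    -- path
    set φ : ℝ → EuclideanSpace ℝ (Fin p) := fun t => β₀ + t • u with hφ
    have hseg : ∀ t ∈ Set.Icc (0:ℝ) 1, φ t ∈ U := by
      intro t ht
      have : φ t = (1 - t) • β₀ + t • β := by
        simp only [hφ, hu]
        module
      rw [this]
      exact hUconv hβ₀ hβ (by linarith [ht.1, ht.2]) ht.1 (by ring)
    set f : ℝ → ℝ := fun t => ⟪u, M (φ t)⟫ with hf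
    have hderiv : ∀ t ∈ Set.Icc (0:ℝ) 1,
        HasDerivAt f ⟪u, fderiv ℝ M (φ t) u⟫ t := by
      intro t ht
      have hφd : HasDerivAt φ u t := by
        simpa [hφ] using ((hasDerivAt_id t).smul_const u).const_add β₀
      have hMd : DifferentiableAt ℝ M (φ t) :=
        hMdiff.differentiableAt (hUopen.mem_nhds (hseg t ht))
      have hcomp : HasDerivAt (fun t => M (φ t)) (fderiv ℝ M (φ t) u) t :=
        (hMd.hasFDerivAt.comp_hasDerivAt t hφd)
      have := (hasDerivAt_const (𝕜 := ℝ) t u).inner ℝ hcomp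
      simpa using this
    have hcont : ContinuousOn f (Set.Icc 0 1) := by
      intro t ht
      exact ((hderiv t ht).continuousAt).continuousWithinAt
    obtain ⟨ξ, hξ, hξeq⟩ := exists_hasDerivAt_eq_slope f
      (fun t => ⟪u, fderiv ℝ M (φ t) u⟫) (by norm_num) hcont
      (fun t ht => hderiv t (Set.mem_Ioo.mp ht |> fun h => ⟨h.1.le, h.2.le⟩))
    have hξU : φ ξ ∈ U := hseg ξ ⟨hξ.1.le, hξ.2.le⟩
    have hbound : ⟪u, fderiv ℝ M (φ ξ) u⟫ ≤ -c * ‖u‖ ^ 2 := hneg _ hξU u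
    have hf0 : f 0 = 0 := by simp [hf, hφ, hM0]
    have hf1 : f 1 = ⟪u, M β⟫ := by
      simp only [hf, hφ]
      congr 2
      simp [hu]
    rw [hξeq] at hbound
    have hslope : ⟪u, M β⟫ ≤ -c * ‖u‖ ^ 2 := by
      rw [← hf1]
      have : (f 1 - f 0) / (1 - 0) = f 1 := by rw [hf0]; ring
      linarith [this ▸ hbound]
    have hcs : ⟪u, M β⟫ ≥ -(‖u‖ * ‖M β‖) := by
      have := abs_real_inner_le_norm u (M β)
      linarith [neg_abs_le (⟪u, M β⟫)]
    have hcu : c * ‖u‖ ^ 2 ≤ ‖u‖ * ‖M β‖ := by nlinarith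
    have hupos : 0 < ‖u‖ := norm_pos_iff.mpr hu0
    calc c * ‖u‖ = c * ‖u‖ ^ 2 / ‖u‖ := by field_simp
      _ ≤ ‖u‖ * ‖M β‖ / ‖u‖ := by gcongr
      _ = ‖M β‖ := by field_simp
  refine ⟨fun β hβ hMβ => ?_, key⟩
  have := key β hβ
  rw [hMβ] at this
  simp only [norm_zero] at this
  have : ‖β - β₀‖ ≤ 0 := by nlinarith
  have : β - β₀ = 0 := by
    rw [← norm_le_zero_iff]; exact this
  exact sub_eq_zero.mp this
end

section
/- If ‖Z‖ ≤ B almost surely, G, G* are survival-type functions bounded below by η₀ > 0, and β, β* ∈ ℝ^p, then the moment bound E‖m(β,G) − m(β*,G*)‖² ≤ 2(η₃·E|𝟙(Y ≥ Z'β) − 𝟙(Y ≥ Z'β*)| + η₄‖G − G*‖²_∞ + η₅‖β − β*‖²) holds for constants η₃, η₄, η₅ depending only on B, η₀ and a uniform density bound, where m(β,G) = Z(𝟙(Y ≥ Z'β)/G(Z'β|Z) − (1−τ)). -/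
open MeasureTheory

private lemma key_frac (η₀ g g' I I' E : ℝ) (hη₀ : 0 < η₀) (hg : η₀ ≤ g) (hg' : η₀ ≤ g')
    (hI'0 : 0 ≤ I') (hI'1 : I' ≤ 1) (hE : |g - g'| ≤ E) :
    |I/g - I'/g'| ≤ |I - I'|/η₀ + E/η₀^2 := by
  have hgp : 0 < g := hη₀.trans_le hg
  have hg'p : 0 < g' := hη₀.trans_le hg'
  have hE0 : 0 ≤ E := (abs_nonneg _).trans hE
  have heq : I/g - I'/g' = (I - I')/g + I' * (g' - g)/(g*g') := by
    field_simp; ring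
  rw [heq]
  calc |(I - I')/g + I' * (g' - g)/(g*g')|
      ≤ |(I - I')/g| + |I' * (g' - g)/(g*g')| := abs_add_le _ _
    _ ≤ |I - I'|/η₀ + E/η₀^2 := by
        have hb1 : |(I - I')/g| ≤ |I - I'|/η₀ := by
          rw [abs_div, abs_of_pos hgp]
          gcongr
        have hb2 : |I' * (g' - g)/(g*g')| ≤ E/η₀^2 := by
          rw [abs_div, abs_mul, abs_of_pos (by positivity : (0:ℝ) < g*g'),
            abs_of_nonneg hI'0, abs_sub_comm]
          have h1 : I' * |g - g'| ≤ E := by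
            calc I' * |g - g'| ≤ 1 * E :=
              mul_le_mul hI'1 hE (abs_nonneg _) zero_le_one
            _ = E := one_mul E
          have h2 : η₀^2 ≤ g * g' := by nlinarith
          calc I' * |g - g'| / (g * g') ≤ E / (g*g') := by gcongr
            _ ≤ E / η₀^2 := by gcongr
        linarith

private lemma key_sq (η₀ B D c g g' I I' n : ℝ) (hη₀ : 0 < η₀)
    (hI : I = 0 ∨ I = 1) (hI' : I' = 0 ∨ I' = 1) (hg : η₀ ≤ g) (hg' : η₀ ≤ g')
    (hE : |g - g'| ≤ D + c) (hn0 : 0 ≤ n) (hn : n ≤ B) :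
    (|I/g - I'/g'| * n)^2
      ≤ 2*B^2/η₀^2 * |I - I'| + 4*B^2/η₀^4*D^2 + 4*B^2/η₀^4*c^2 := by
  have hI'0 : 0 ≤ I' := by rcases hI' with h|h <;> simp [h]
  have hI'1 : I' ≤ 1 := by rcases hI' with h|h <;> simp [h]
  have hx := key_frac η₀ g g' I I' (D+c) hη₀ hg hg' hI'0 hI'1 hE
  set a := |I - I'|/η₀ with ha
  set e := (D+c)/η₀^2 with he
  have hx0 : 0 ≤ |I/g - I'/g'| := abs_nonneg _
  have hae : 0 ≤ a + e := hx0.trans hx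
  have step1 : (|I/g - I'/g'| * n)^2 ≤ ((a+e)*B)^2 := by
    have h1 : |I/g - I'/g'| * n ≤ (a+e)*B := mul_le_mul hx hn hn0 hae
    have h2 : 0 ≤ |I/g - I'/g'| * n := mul_nonneg hx0 hn0
    exact pow_le_pow_left₀ h2 h1 2
  have habs : |I - I'|^2 = |I - I'| := by
    rcases hI with h|h <;> rcases hI' with h'|h' <;> norm_num [h, h']
  have ha2 : a^2 = |I - I'|/η₀^2 := by rw [ha, div_pow, habs]
  have he2 : e^2 ≤ (2*D^2 + 2*c^2)/η₀^4 := by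
    rw [he, div_pow]
    have : (η₀^2)^2 = η₀^4 := by ring
    rw [this]
    gcongr
    nlinarith [sq_nonneg (D - c)]
  have step2 : ((a+e)*B)^2 ≤ (2*a^2 + 2*e^2)*B^2 := by
    nlinarith [sq_nonneg (a - e), sq_nonneg B]
  have step3 : (2*a^2 + 2*e^2)*B^2
      ≤ (2*(|I - I'|/η₀^2) + 2*((2*D^2 + 2*c^2)/η₀^4))*B^2 := by
    nlinarith [sq_nonneg B]
  have final : (2*(|I - I'|/η₀^2) + 2*((2*D^2 + 2*c^2)/η₀^4))*B^2
      = 2*B^2/η₀^2 * |I - I'| + 4*B^2/η₀^4*D^2 + 4*B^2/η₀^4*c^2 := by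
    field_simp; ring
  linarith

/-- Moment bound for the estimating function `m(β,G) = Z(𝟙(Y ≥ Z'β)/G(Z'β|Z) − (1−τ))`:
there exist constants `η₃, η₄, η₅` depending only on `B`, `η₀`, `L` (and `τ`) such that
`E‖m(β,G) − m(β*,G*)‖² ≤ 2(η₃ E|𝟙(Y ≥ Z'β) − 𝟙(Y ≥ Z'β*)| + η₄‖G−G*‖²_∞ + η₅‖β−β*‖²)`. -/
theorem estimating_function_moment_bound
    (τ B η₀ : ℝ) (hτ : τ ∈ Set.Ioo (0:ℝ) 1) (hB : 0 ≤ B) (hη₀ : 0 < η₀) (L : NNReal) :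
    ∃ η₃ η₄ η₅ : ℝ, 0 ≤ η₃ ∧ 0 ≤ η₄ ∧ 0 ≤ η₅ ∧
      ∀ {Ω : Type} [MeasurableSpace Ω] (μ : Measure Ω), IsProbabilityMeasure μ →
      ∀ {p : ℕ} (Y : Ω → ℝ) (Z : Ω → EuclideanSpace ℝ (Fin p)),
        Measurable Y → Measurable Z → (∀ ω, ‖Z ω‖ ≤ B) →
      ∀ (G Gstar : ℝ → EuclideanSpace ℝ (Fin p) → ℝ),
        (∀ t z, η₀ ≤ G t z) → (∀ t z, η₀ ≤ Gstar t z) →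
        (∀ z, LipschitzWith L (fun t => Gstar t z)) →
      ∀ (β βstar : EuclideanSpace ℝ (Fin p)) (D : ℝ),
        (∀ t z, |G t z - Gstar t z| ≤ D) →
        (∫ ω, ‖((if (inner ℝ β (Z ω) : ℝ) ≤ Y ω then (1:ℝ) else 0) / G (inner ℝ β (Z ω)) (Z ω)
                  - (1 - τ)) • Z ω
              - ((if (inner ℝ βstar (Z ω) : ℝ) ≤ Y ω then (1:ℝ) else 0)
                    / Gstar (inner ℝ βstar (Z ω)) (Z ω) - (1 - τ)) • Z ω‖ ^ 2 ∂μ)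
          ≤ 2 * (η₃ * (∫ ω, |(if (inner ℝ β (Z ω) : ℝ) ≤ Y ω then (1:ℝ) else 0)
                        - (if (inner ℝ βstar (Z ω) : ℝ) ≤ Y ω then (1:ℝ) else 0)| ∂μ)
              + η₄ * D ^ 2 + η₅ * ‖β - βstar‖ ^ 2) := by
  refine ⟨B^2/η₀^2, 2*B^2/η₀^4, 2*(L:ℝ)^2*B^4/η₀^4, by positivity, by positivity,
    by positivity, ?_⟩
  intro Ω _ μ hμ p Y Z hY hZ hZB G Gstar hG hGstar hLip β βstar D hD
  have hD0 : 0 ≤ D := (abs_nonneg _).trans (hD 0 0)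
  set d : ℝ := ‖β - βstar‖ with hd
  set c : ℝ := (L:ℝ) * B * d with hc
  have hc0 : 0 ≤ c := by positivity
  set I : Ω → ℝ := fun ω => if (inner ℝ β (Z ω) : ℝ) ≤ Y ω then (1:ℝ) else 0 with hI
  set I' : Ω → ℝ := fun ω => if (inner ℝ βstar (Z ω) : ℝ) ≤ Y ω then (1:ℝ) else 0 with hI'
  set h : Ω → ℝ := fun ω => |I ω - I' ω| with hh
  set c1 : ℝ := 2*B^2/η₀^2 with hc1
  set c2 : ℝ := 4*B^2/η₀^4*D^2 + 4*B^2/η₀^4*c^2 with hc2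
  -- pointwise bound
  have hpt : ∀ ω, ‖(I ω / G (inner ℝ β (Z ω)) (Z ω) - (1 - τ)) • Z ω
      - (I' ω / Gstar (inner ℝ βstar (Z ω)) (Z ω) - (1 - τ)) • Z ω‖ ^ 2
      ≤ c1 * h ω + c2 := by
    intro ω
    have hre : (I ω / G (inner ℝ β (Z ω)) (Z ω) - (1 - τ)) • Z ω
        - (I' ω / Gstar (inner ℝ βstar (Z ω)) (Z ω) - (1 - τ)) • Z ω
        = (I ω / G (inner ℝ β (Z ω)) (Z ω) - I' ω / Gstar (inner ℝ βstar (Z ω)) (Z ω)) • Z ω := by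
      rw [← sub_smul]; ring_nf
    rw [hre, norm_smul, Real.norm_eq_abs]
    have hIω : I ω = 0 ∨ I ω = 1 := by
      simp only [hI]; split_ifs <;> simp
    have hI'ω : I' ω = 0 ∨ I' ω = 1 := by
      simp only [hI']; split_ifs <;> simp
    have htt : |(inner ℝ β (Z ω) : ℝ) - inner ℝ βstar (Z ω)| ≤ B * d := by
      have : (inner ℝ β (Z ω) : ℝ) - inner ℝ βstar (Z ω) = inner ℝ (β - βstar) (Z ω) := by
        rw [inner_sub_left]
      rw [this]
      calc |(inner ℝ (β - βstar) (Z ω) : ℝ)| ≤ ‖β - βstar‖ * ‖Z ω‖ := abs_real_inner_le_norm _ _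
        _ ≤ d * B := by rw [← hd]; gcongr; exact hZB ω
        _ = B * d := mul_comm _ _
    have hE : |G (inner ℝ β (Z ω)) (Z ω) - Gstar (inner ℝ βstar (Z ω)) (Z ω)| ≤ D + c := by
      have h1 : |G (inner ℝ β (Z ω)) (Z ω) - Gstar (inner ℝ β (Z ω)) (Z ω)| ≤ D := hD _ _
      have h2 : |Gstar (inner ℝ β (Z ω)) (Z ω) - Gstar (inner ℝ βstar (Z ω)) (Z ω)| ≤ c := by
        have := (hLip (Z ω)).dist_le_mul (inner ℝ β (Z ω)) (inner ℝ βstar (Z ω))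
        rw [Real.dist_eq, Real.dist_eq] at this
        calc |Gstar (inner ℝ β (Z ω)) (Z ω) - Gstar (inner ℝ βstar (Z ω)) (Z ω)|
            ≤ (L:ℝ) * |(inner ℝ β (Z ω) : ℝ) - inner ℝ βstar (Z ω)| := this
          _ ≤ (L:ℝ) * (B * d) := by gcongr
          _ = c := by rw [hc]; ring
      calc |G (inner ℝ β (Z ω)) (Z ω) - Gstar (inner ℝ βstar (Z ω)) (Z ω)|
          ≤ |G (inner ℝ β (Z ω)) (Z ω) - Gstar (inner ℝ β (Z ω)) (Z ω)|
            + |Gstar (inner ℝ β (Z ω)) (Z ω) - Gstar (inner ℝ βstar (Z ω)) (Z ω)| :=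
            abs_sub_le _ _ _
        _ ≤ D + c := add_le_add h1 h2
    simp only [hc1, hc2, hh]
    rw [← add_assoc]
    exact key_sq η₀ B D c _ _ (I ω) (I' ω) ‖Z ω‖ hη₀ hIω hI'ω
      (hG _ _) (hGstar _ _) hE (norm_nonneg _) (hZB ω)
  -- measurability and integrability of h
  have hmI : Measurable I := by
    apply Measurable.ite _ measurable_const measurable_const
    exact measurableSet_le ((continuous_const.inner continuous_id).measurable.comp hZ) hY
  have hmI' : Measurable I' := by
    apply Measurable.ite _ measurable_const measurable_const
    exact measurableSet_le ((continuous_const.inner continuous_id).measurable.comp hZ) hY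
  have hmh : Measurable h := (hmI.sub hmI').abs
  have hhb : ∀ ω, ‖h ω‖ ≤ 1 := by
    intro ω
    rw [Real.norm_eq_abs, hh, abs_abs]
    have h1 : I ω = 0 ∨ I ω = 1 := by simp only [hI]; split_ifs <;> simp
    have h2 : I' ω = 0 ∨ I' ω = 1 := by simp only [hI']; split_ifs <;> simp
    rcases h1 with e|e <;> rcases h2 with e'|e' <;> norm_num [e, e']
  have hhint : Integrable h μ :=
    (integrable_const (1:ℝ)).mono' hmh.aestronglyMeasurable
      (Filter.Eventually.of_forall hhb)
  have hgint : Integrable (fun ω => c1 * h ω + c2) μ :=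
    (hhint.const_mul c1).add (integrable_const c2)
  have hh0 : 0 ≤ ∫ ω, h ω ∂μ := integral_nonneg fun ω => abs_nonneg _
  have hRHSeq : 2 * (B^2/η₀^2 * (∫ ω, h ω ∂μ) + 2*B^2/η₀^4 * D ^ 2
      + 2*(L:ℝ)^2*B^4/η₀^4 * d ^ 2) = c1 * (∫ ω, h ω ∂μ) + c2 := by
    rw [hc1, hc2, hc]; ring
  rw [show (2 : ℝ) * (B^2/η₀^2 * (∫ ω, |I ω - I' ω| ∂μ) + 2*B^2/η₀^4 * D ^ 2
      + 2*(L:ℝ)^2*B^4/η₀^4 * ‖β - βstar‖ ^ 2) = c1 * (∫ ω, h ω ∂μ) + c2 from hRHSeq]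
  by_cases hf : Integrable (fun ω => ‖(I ω / G (inner ℝ β (Z ω)) (Z ω) - (1 - τ)) • Z ω
      - (I' ω / Gstar (inner ℝ βstar (Z ω)) (Z ω) - (1 - τ)) • Z ω‖ ^ 2) μ
  · calc (∫ ω, ‖(I ω / G (inner ℝ β (Z ω)) (Z ω) - (1 - τ)) • Z ω
        - (I' ω / Gstar (inner ℝ βstar (Z ω)) (Z ω) - (1 - τ)) • Z ω‖ ^ 2 ∂μ)
        ≤ ∫ ω, (c1 * h ω + c2) ∂μ := integral_mono hf hgint hpt
      _ = c1 * (∫ ω, h ω ∂μ) + c2 := by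
          rw [integral_add (hhint.const_mul c1) (integrable_const c2),
            integral_const, probReal_univ, integral_const_mul]
          simp
  · rw [integral_undef hf]
    have : 0 ≤ c2 := by rw [hc2]; positivity
    have hc10 : 0 ≤ c1 := by rw [hc1]; positivity
    nlinarith
end
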